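/- Let ψ, φ ∈ L(𝕄_D) with ψ a positive non-transient map and φ a strictly positive map satisfying c(φ) ≤ r for some r ∈ (0,1). Then for any A,B ∈ 𝕊_D, |ln‖ψ(φ·A)‖ − ln‖ψ(φ·B)‖| ≤ c(φ) · (2/r) ln(1/(1−r)). -/

import Mathlib

open MeasureTheory Matrix Filter
open scoped BigOperators ENNReal NNReal ComplexOrder

noncomputable section

abbrev Mat (D : ℕ) := Matrix (Fin D) (Fin D) ℂ

instance {D : ℕ} : MeasurableSpace (Mat D) := MeasurableSpace.pi

def traceNorm {D : ℕ} (A : Mat D) : ℝ :=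
  (((Matrix.posSemidef_conjTranspose_mul_self A).1.eigenvectorUnitary.1 *
      Matrix.diagonal (((↑) : ℝ → ℂ) ∘ (Real.sqrt ·) ∘ (Matrix.posSemidef_conjTranspose_mul_self A).1.eigenvalues) *
      (star (Matrix.posSemidef_conjTranspose_mul_self A).1.eigenvectorUnitary : Mat D)).trace).re

def SD (D : ℕ) : Set (Mat D) := {A | A.PosSemidef ∧ A.trace = 1}
def SDo (D : ℕ) : Set (Mat D) := {A | A.PosDef ∧ A.trace = 1}

abbrev MapM (D : ℕ) := Mat D →ₗ[ℂ] Mat D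

def IsPositiveMap {D : ℕ} (φ : MapM D) : Prop := ∀ A : Mat D, A.PosSemidef → (φ A).PosSemidef
def IsStrictlyPositiveMap {D : ℕ} (φ : MapM D) : Prop := ∀ A ∈ SD D, (φ A).PosDef

def opNorm {D : ℕ} (φ : MapM D) : ℝ :=
  sSup {x | ∃ A : Mat D, traceNorm A = 1 ∧ x = traceNorm (φ A)}

def vval {D : ℕ} (φ : MapM D) : ℝ := sInf {x | ∃ A ∈ SD D, x = traceNorm (φ A)}

def mcoef {D : ℕ} (A B : Mat D) : ℝ := sSup {l : ℝ | (A - (l : ℂ) • B).PosSemidef}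

def dmet {D : ℕ} (A B : Mat D) : ℝ :=
  (1 - mcoef A B * mcoef B A) / (1 + mcoef A B * mcoef B A)

def NonDestructive {D : ℕ} (φ : MapM D) : Prop := ∀ A ∈ SD D, φ A ≠ 0

def hsAdjoint {D : ℕ} (φ : MapM D) : MapM D where
  toFun A := Matrix.of fun i j => ((φ (Matrix.single i j 1))ᴴ * A).trace
  map_add' A B := by
    ext i j
    simp [Matrix.mul_add]
  map_smul' c A := by
    ext i j
    simp [Matrix.mul_smul]

def NonTransient {D : ℕ} (φ : MapM D) : Prop := NonDestructive (hsAdjoint φ)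

def projAct {D : ℕ} (φ : MapM D) (X : Mat D) : Mat D := ((φ X).trace)⁻¹ • φ X

def ccoef {D : ℕ} (φ : MapM D) : ℝ :=
  sSup {x | ∃ A ∈ SD D, ∃ B ∈ SD D, x = dmet (projAct φ A) (projAct φ B)}

def IsRightPF {D : ℕ} (φ : MapM D) (R : Mat D) : Prop :=
  R ∈ SD D ∧ ∃ Λ : ℝ, 0 < Λ ∧ φ R = (Λ : ℂ) • R ∧
    spectralRadius ℂ (φ : Module.End ℂ (Mat D)) = ENNReal.ofReal Λ

def IsLeftPF {D : ℕ} (φ : MapM D) (L : Mat D) : Prop :=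
  L ∈ SD D ∧ ∃ Λ : ℝ, 0 < Λ ∧ hsAdjoint φ L = (Λ : ℂ) • L ∧
    spectralRadius ℂ (φ : Module.End ℂ (Mat D)) = ENNReal.ofReal Λ

/-- `prodFrom φ0 θ a n ω = φ_n ∘ ⋯ ∘ φ_{a+1}` (identity if `n ≤ a`), where `φ_k = φ0 ∘ θ^k`. -/
def prodFrom {D : ℕ} {Ω : Type*} (φ0 : Ω → MapM D) (θ : Ω → Ω) (a : ℕ) : ℕ → Ω → MapM D
  | 0, _ => LinearMap.id
  | n+1, ω => if n+1 ≤ a then LinearMap.id else (φ0 (θ^[n+1] ω)) ∘ₗ prodFrom φ0 θ a n ω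

/-- `Φ^{(n)} = φ_n ∘ ⋯ ∘ φ_1`. -/
def PhiSeq {D : ℕ} {Ω : Type*} (φ0 : Ω → MapM D) (θ : Ω → Ω) (n : ℕ) (ω : Ω) : MapM D :=
  prodFrom φ0 θ 0 n ω

/-- Assumption 1 : the sequence `Φ^{(n)}` is almost surely eventually strictly positive. -/
def Assumption1 {D : ℕ} {Ω : Type*} [MeasurableSpace Ω] (μ : Measure Ω)
    (φ0 : Ω → MapM D) (θ : Ω → Ω) : Prop :=
  ∀ᵐ ω ∂μ, ∃ n : ℕ, 1 ≤ n ∧ ∀ k : ℕ, IsStrictlyPositiveMap (PhiSeq φ0 θ (n + k) ω)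

/-- iteration of `θ` (for `k ≥ 0`) resp. its inverse `θ'` (for `k < 0`). -/
def zIter {Ω : Type*} (θ θ' : Ω → Ω) : ℤ → Ω → Ω
  | Int.ofNat n, ω => θ^[n] ω
  | Int.negSucc n, ω => θ'^[n+1] ω

/-- `Ψ^{(n)} = ψ_n ∘ ⋯ ∘ ψ_1` where `ψ_k = φ_{-k}*`. -/
def PsiSeq {D : ℕ} {Ω : Type*} (φ0 : Ω → MapM D) (θ' : Ω → Ω) : ℕ → Ω → MapM D
  | 0, _ => LinearMap.id
  | n+1, ω => hsAdjoint (φ0 (θ'^[n+1] ω)) ∘ₗ PsiSeq φ0 θ' n ω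

/-- `Φ^{(-m)} = φ_{-1} ∘ ⋯ ∘ φ_{-m}` (indexed by `m ≥ 1`). -/
def PhiNeg {D : ℕ} {Ω : Type*} (φ0 : Ω → MapM D) (θ' : Ω → Ω) : ℕ → Ω → MapM D
  | 0, _ => LinearMap.id
  | m+1, ω => PhiNeg φ0 θ' m ω ∘ₗ (φ0 (θ'^[m+1] ω))

/-- `compDown f k j = f_k ∘ f_{k+1} ∘ ⋯ ∘ f_{k+j}`. -/
def compDown {D : ℕ} {Ω : Type*} (f : ℕ → Ω → MapM D) (k : ℕ) : ℕ → Ω → MapM D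
  | 0, ω => f k ω
  | j+1, ω => compDown f k j ω ∘ₗ f (k+j+1) ω

/-- the σ-algebra generated by `(φ_k)_{k ≥ n}`. -/
def sigmaUp {D : ℕ} {Ω : Type*} (φ0 : Ω → MapM D) (θ θ' : Ω → Ω) (n : ℤ) :
    MeasurableSpace Ω :=
  ⨆ (k : ℤ) (_ : n ≤ k) (A : Mat D),
    MeasurableSpace.comap (fun ω => φ0 (zIter θ θ' k ω) A) inferInstance

/-- the σ-algebra generated by `(φ_j)_{j ≤ k}`. -/
def sigmaLow {D : ℕ} {Ω : Type*} (φ0 : Ω → MapM D) (θ θ' : Ω → Ω) (k : ℤ) :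
    MeasurableSpace Ω :=
  ⨆ (j : ℤ) (_ : j ≤ k) (A : Mat D),
    MeasurableSpace.comap (fun ω => φ0 (zIter θ θ' j ω) A) inferInstance

/-- Assumption 2 : `E[|ln‖φ₀*‖|] < ∞` and `E[|ln v(φ₀*)|] < ∞`. -/
def Assumption2 {D : ℕ} {Ω : Type*} [MeasurableSpace Ω] (μ : Measure Ω)
    (φ0 : Ω → MapM D) : Prop :=
  Integrable (fun ω => Real.log (opNorm (hsAdjoint (φ0 ω)))) μ ∧
  Integrable (fun ω => Real.log (vval (hsAdjoint (φ0 ω)))) μ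

/-- Assumption 2_p : `ln‖φ₀*‖` and `ln v(φ₀*)` are in `L^p`. -/
def Assumption2p {D : ℕ} {Ω : Type*} [MeasurableSpace Ω] (μ : Measure Ω)
    (φ0 : Ω → MapM D) (p : ℝ) : Prop :=
  MemLp (fun ω => Real.log (opNorm (hsAdjoint (φ0 ω)))) (ENNReal.ofReal p) μ ∧
  MemLp (fun ω => Real.log (vval (hsAdjoint (φ0 ω)))) (ENNReal.ofReal p) μ

-- AUXBLOCK
namespace StmtAux
open Matrix Complex

variable {D : ℕ}

lemma trace_eq_sum_eigen {A : Mat D} (hA : A.IsHermitian) :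
    A.trace = ((∑ i, hA.eigenvalues i : ℝ) : ℂ) := by
  conv_lhs => rw [hA.spectral_theorem, Unitary.conjStarAlgAut_apply]
  rw [Matrix.trace_mul_cycle, Matrix.mem_unitaryGroup_iff'.mp hA.eigenvectorUnitary.2, one_mul,
    Matrix.trace_diagonal]
  rw [show ((∑ i, hA.eigenvalues i : ℝ) : ℂ) = ∑ i, ((hA.eigenvalues i : ℝ) : ℂ) by push_cast; rfl]
  rfl

lemma psd_trace_nonneg {A : Mat D} (hA : A.PosSemidef) : 0 ≤ A.trace := by
  rw [trace_eq_sum_eigen hA.1, Complex.zero_le_real]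
  exact Finset.sum_nonneg fun i _ => hA.eigenvalues_nonneg i

lemma psd_trace_eq_zero {A : Mat D} (hA : A.PosSemidef) (h : A.trace = 0) : A = 0 := by
  have hsum : ∑ i, hA.1.eigenvalues i = 0 := by
    have h2 := trace_eq_sum_eigen hA.1
    rw [h] at h2
    exact_mod_cast h2.symm
  have hz := (Finset.sum_eq_zero_iff_of_nonneg
    (fun i _ => hA.eigenvalues_nonneg i)).mp hsum
  have hdiag : Matrix.diagonal (RCLike.ofReal ∘ hA.1.eigenvalues) = (0 : Mat D) := by
    have hfun : (RCLike.ofReal ∘ hA.1.eigenvalues : Fin D → ℂ) = fun _ => 0 := by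
      funext i
      show ((hA.1.eigenvalues i : ℝ) : ℂ) = 0
      rw [hz i (Finset.mem_univ i)]
      simp
    rw [hfun, Matrix.diagonal_zero]
  rw [hA.1.spectral_theorem, Unitary.conjStarAlgAut_apply, hdiag, Matrix.mul_zero, Matrix.zero_mul]

lemma conj_diag_psd {A : Mat D} (hA : A.IsHermitian) (f : Fin D → ℝ) (hf : ∀ i, 0 ≤ f i) :
    ((hA.eigenvectorUnitary : Mat D) * Matrix.diagonal (RCLike.ofReal ∘ f) *
      (star hA.eigenvectorUnitary : Mat D)).PosSemidef := by
  rw [Matrix.star_eq_conjTranspose]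
  apply Matrix.PosSemidef.mul_mul_conjTranspose_same
  refine Matrix.posSemidef_diagonal_iff.mpr fun i => ?_
  exact Complex.zero_le_real.mpr (hf i)

lemma diag_ofReal_sub (f g : Fin D → ℝ) :
    (Matrix.diagonal (RCLike.ofReal ∘ f) : Mat D) - Matrix.diagonal (RCLike.ofReal ∘ g)
      = Matrix.diagonal (RCLike.ofReal ∘ (f - g)) := by
  have hfun : (fun i => (RCLike.ofReal ∘ f) i - (RCLike.ofReal ∘ g) i)
      = (RCLike.ofReal ∘ (f - g) : Fin D → ℂ) := by
    funext i
    show (f i : ℂ) - (g i : ℂ) = ((f i - g i : ℝ) : ℂ)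
    push_cast
    ring
  rw [Matrix.diagonal_sub, hfun]

lemma conj_diag_eq {A : Mat D} (hA : A.IsHermitian) (f g : Fin D → ℝ) :
    (hA.eigenvectorUnitary : Mat D) * Matrix.diagonal (RCLike.ofReal ∘ f) *
      (star hA.eigenvectorUnitary : Mat D)
    - (hA.eigenvectorUnitary : Mat D) * Matrix.diagonal (RCLike.ofReal ∘ g) *
      (star hA.eigenvectorUnitary : Mat D)
    = (hA.eigenvectorUnitary : Mat D) * Matrix.diagonal (RCLike.ofReal ∘ (f - g)) *
      (star hA.eigenvectorUnitary : Mat D) := by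
  rw [← Matrix.sub_mul, ← Matrix.mul_sub, diag_ofReal_sub]

lemma diag_const (c : ℝ) :
    (Matrix.diagonal (RCLike.ofReal ∘ fun _ : Fin D => c) : Mat D) = (c : ℂ) • 1 := by
  rw [Matrix.smul_one_eq_diagonal]
  rfl

/-- A positive definite matrix dominates `ε • 1` for some `ε > 0`. -/
lemma posdef_ge_eps {P : Mat D} (hP : P.PosDef) (hD : 0 < D) :
    ∃ ε : ℝ, 0 < ε ∧ (P - (ε : ℂ) • 1).PosSemidef := by
  haveI : Nonempty (Fin D) := ⟨⟨0, hD⟩⟩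
  obtain ⟨i0, -, hi0⟩ := Finset.exists_min_image Finset.univ hP.1.eigenvalues
    ⟨Classical.arbitrary (Fin D), Finset.mem_univ _⟩
  set ε := hP.1.eigenvalues i0 with hεdef
  refine ⟨ε, hP.eigenvalues_pos i0, ?_⟩
  have h1 : (ε : ℂ) • (1 : Mat D)
      = (hP.1.eigenvectorUnitary : Mat D)
        * Matrix.diagonal (RCLike.ofReal ∘ fun _ : Fin D => ε)
        * (star hP.1.eigenvectorUnitary : Mat D) := by
    rw [diag_const, Matrix.mul_smul, Matrix.mul_one, Matrix.smul_mul,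
      Matrix.mem_unitaryGroup_iff.mp hP.1.eigenvectorUnitary.2]
  have key : P - (ε : ℂ) • 1
      = (hP.1.eigenvectorUnitary : Mat D)
        * Matrix.diagonal (RCLike.ofReal ∘ (hP.1.eigenvalues - fun _ => ε))
        * (star hP.1.eigenvectorUnitary : Mat D) := by
    conv_lhs => rw [hP.1.spectral_theorem, Unitary.conjStarAlgAut_apply, h1]
    exact conj_diag_eq hP.1 _ _
  rw [key]
  exact conj_diag_psd hP.1 _ fun i => sub_nonneg.mpr (hi0 i (Finset.mem_univ i))

/-- A positive semidefinite matrix of unit trace is dominated by `1`. -/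
lemma psd_le_one {Q : Mat D} (hQ : Q.PosSemidef) (htr : Q.trace = 1) :
    ((1 : Mat D) - Q).PosSemidef := by
  have hsum : ∑ i, hQ.1.eigenvalues i = 1 := by
    have h2 := trace_eq_sum_eigen hQ.1
    rw [htr] at h2
    exact_mod_cast h2.symm
  have hle : ∀ i, hQ.1.eigenvalues i ≤ 1 := by
    intro i
    rw [← hsum]
    exact Finset.single_le_sum (fun j _ => hQ.eigenvalues_nonneg j) (Finset.mem_univ i)
  have h1 : (1 : Mat D)
      = (hQ.1.eigenvectorUnitary : Mat D)
        * Matrix.diagonal (RCLike.ofReal ∘ fun _ : Fin D => (1 : ℝ))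
        * (star hQ.1.eigenvectorUnitary : Mat D) := by
    rw [diag_const, Complex.ofReal_one, one_smul, Matrix.mul_one,
      Matrix.mem_unitaryGroup_iff.mp hQ.1.eigenvectorUnitary.2]
  have key : (1 : Mat D) - Q
      = (hQ.1.eigenvectorUnitary : Mat D)
        * Matrix.diagonal (RCLike.ofReal ∘ ((fun _ => (1 : ℝ)) - hQ.1.eigenvalues))
        * (star hQ.1.eigenvectorUnitary : Mat D) := by
    conv_lhs => rw [hQ.1.spectral_theorem, Unitary.conjStarAlgAut_apply]
    conv_lhs => rw [h1]
    exact conj_diag_eq hQ.1 _ _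
  rw [key]
  exact conj_diag_psd hQ.1 _ fun i => sub_nonneg.mpr (hle i)

lemma ofReal_smul_herm {A : Mat D} (hA : A.IsHermitian) (c : ℝ) :
    ((c : ℂ) • A).IsHermitian := by
  unfold Matrix.IsHermitian
  rw [Matrix.conjTranspose_smul, Complex.star_def, Complex.conj_ofReal, hA.eq]

lemma psd_smul {A : Mat D} (hA : A.PosSemidef) {c : ℝ} (hc : 0 ≤ c) :
    ((c : ℂ) • A).PosSemidef := by
  refine Matrix.PosSemidef.of_dotProduct_mulVec_nonneg (ofReal_smul_herm hA.1 c) fun x => ?_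
  rw [Matrix.smul_mulVec, dotProduct_smul, smul_eq_mul]
  exact mul_nonneg (Complex.zero_le_real.mpr hc) (hA.dotProduct_mulVec_nonneg x)

lemma posdef_smul {A : Mat D} (hA : A.PosDef) {c : ℝ} (hc : 0 < c) :
    ((c : ℂ) • A).PosDef := by
  refine Matrix.PosDef.of_dotProduct_mulVec_pos (ofReal_smul_herm hA.1 c) fun x hx => ?_
  rw [Matrix.smul_mulVec, dotProduct_smul, smul_eq_mul]
  exact mul_pos (Complex.zero_lt_real.mpr hc) (hA.dotProduct_mulVec_pos hx)

lemma quad_sub_smul (P Q : Mat D) (l : ℝ) (x : Fin D → ℂ) :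
    star x ⬝ᵥ (P - (l : ℂ) • Q) *ᵥ x
      = star x ⬝ᵥ P *ᵥ x - (l : ℂ) * (star x ⬝ᵥ Q *ᵥ x) := by
  rw [Matrix.sub_mulVec, dotProduct_sub, Matrix.smul_mulVec,
    dotProduct_smul, smul_eq_mul]

lemma nonneg_eq_re {z : ℂ} (hz : 0 ≤ z) : z = (z.re : ℂ) := by
  obtain ⟨h1, h2⟩ := Complex.nonneg_iff.mp hz
  exact Complex.ext (by simp) (by simp [← h2])

section mcoef

variable {P Q : Mat D}

lemma mcoef_zero_mem (hP : P.PosSemidef) :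
    (0 : ℝ) ∈ {l : ℝ | (P - (l : ℂ) • Q).PosSemidef} := by
  simpa using hP

lemma mcoef_ub (hP : P.trace = 1) (hQ : Q.trace = 1) :
    ∀ l ∈ {l : ℝ | (P - (l : ℂ) • Q).PosSemidef}, l ≤ 1 := by
  intro l hl
  have h0 := psd_trace_nonneg hl
  rw [Matrix.trace_sub, Matrix.trace_smul, hP, hQ, smul_eq_mul, mul_one] at h0
  have h1 : (0 : ℂ) ≤ ((1 - l : ℝ) : ℂ) := by push_cast; exact h0
  linarith [Complex.zero_le_real.mp h1]

lemma mcoef_bddAbove (hP : P.trace = 1) (hQ : Q.trace = 1) :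
    BddAbove {l : ℝ | (P - (l : ℂ) • Q).PosSemidef} :=
  ⟨1, fun l hl => mcoef_ub hP hQ l hl⟩

lemma mcoef_nonneg (hP : P.PosSemidef) (hPt : P.trace = 1) (hQt : Q.trace = 1) :
    0 ≤ mcoef P Q :=
  le_csSup (mcoef_bddAbove hPt hQt) (mcoef_zero_mem hP)

lemma mcoef_le_one (hP : P.PosSemidef) (hPt : P.trace = 1) (hQt : Q.trace = 1) :
    mcoef P Q ≤ 1 :=
  csSup_le ⟨0, mcoef_zero_mem hP⟩ (mcoef_ub hPt hQt)

lemma mcoef_mem (hP : P.PosSemidef) (hQ : Q.PosSemidef)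
    (hPt : P.trace = 1) (hQt : Q.trace = 1) :
    (P - (mcoef P Q : ℂ) • Q).PosSemidef := by
  set S := {l : ℝ | (P - (l : ℂ) • Q).PosSemidef} with hS
  have hne : S.Nonempty := ⟨0, mcoef_zero_mem hP⟩
  refine Matrix.PosSemidef.of_dotProduct_mulVec_nonneg ?_ ?_
  · exact hP.1.sub (ofReal_smul_herm hQ.1 _)
  · intro x
    rw [quad_sub_smul]
    have hp := hP.dotProduct_mulVec_nonneg x
    have hq := hQ.dotProduct_mulVec_nonneg x
    by_cases hq0 : (star x ⬝ᵥ Q *ᵥ x).re = 0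
    · have hqz : star x ⬝ᵥ Q *ᵥ x = 0 := by rw [nonneg_eq_re hq, hq0]; simp
      rw [hqz, mul_zero, sub_zero]
      exact hp
    · have hqpos : 0 < (star x ⬝ᵥ Q *ᵥ x).re :=
        lt_of_le_of_ne (Complex.nonneg_iff.mp hq).1 (Ne.symm hq0)
      have hub : ∀ l ∈ S, l ≤ (star x ⬝ᵥ P *ᵥ x).re / (star x ⬝ᵥ Q *ᵥ x).re := by
        intro l hl
        have h2 := hl.dotProduct_mulVec_nonneg x
        rw [quad_sub_smul] at h2
        have h3 := (Complex.nonneg_iff.mp h2).1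
        rw [Complex.sub_re, Complex.re_ofReal_mul] at h3
        rw [le_div_iff₀ hqpos]
        linarith
      have hmle : mcoef P Q ≤ (star x ⬝ᵥ P *ᵥ x).re / (star x ⬝ᵥ Q *ᵥ x).re :=
        csSup_le hne hub
      have hmq : mcoef P Q * (star x ⬝ᵥ Q *ᵥ x).re ≤ (star x ⬝ᵥ P *ᵥ x).re :=
        (le_div_iff₀ hqpos).mp hmle
      rw [nonneg_eq_re hp, nonneg_eq_re hq]
      have h4 : (0 : ℂ) ≤ (((star x ⬝ᵥ P *ᵥ x).re - mcoef P Q * (star x ⬝ᵥ Q *ᵥ x).re : ℝ) : ℂ) :=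
        Complex.zero_le_real.mpr (by linarith)
      push_cast at h4
      exact h4

lemma mcoef_pos (hD : 0 < D) (hP : P.PosDef) (hQ : Q.PosSemidef)
    (hPt : P.trace = 1) (hQt : Q.trace = 1) :
    0 < mcoef P Q := by
  obtain ⟨ε, hε, hPe⟩ := posdef_ge_eps hP hD
  have hmem : ε ∈ {l : ℝ | (P - (l : ℂ) • Q).PosSemidef} := by
    have h1 : ((ε : ℂ) • ((1 : Mat D) - Q)).PosSemidef := psd_smul (psd_le_one hQ hQt) hε.le
    have h2 := hPe.add h1
    have h3 : P - (ε : ℂ) • 1 + (ε : ℂ) • ((1 : Mat D) - Q) = P - (ε : ℂ) • Q := by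
      rw [smul_sub]
      abel
    rwa [h3] at h2
  exact lt_of_lt_of_le hε (le_csSup (mcoef_bddAbove hPt hQt) hmem)

end mcoef

/-! ### Hilbert–Schmidt adjoint facts -/

lemma star_trace_conj (A B : Mat D) :
    star ((Aᴴ * B).trace) = (Bᴴ * A).trace := by
  rw [← Matrix.trace_conjTranspose, Matrix.conjTranspose_mul, Matrix.conjTranspose_conjTranspose]

lemma trace_conjTranspose_mul_stdBasis (X : Mat D) (i j : Fin D) :
    (Xᴴ * Matrix.single i j 1).trace = star (X i j) := by
  rw [Matrix.trace, Finset.sum_eq_single j]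
  · rw [Matrix.diag_apply, Matrix.mul_single_apply_same, Matrix.conjTranspose_apply,
      mul_one]
  · intro k _ hk
    rw [Matrix.diag_apply]
    exact Matrix.mul_single_apply_of_ne 1 i j k k hk Xᴴ
  · intro h
    exact absurd (Finset.mem_univ j) h

lemma hsAdjoint_apply (ψ : MapM D) (M : Mat D) (i j : Fin D) :
    hsAdjoint ψ M i j = ((ψ (Matrix.single i j 1))ᴴ * M).trace := rfl

lemma hsAdjoint_trace (ψ : MapM D) (M N : Mat D) :
    ((hsAdjoint ψ M)ᴴ * N).trace = (Mᴴ * ψ N).trace := by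
  have base : ∀ i j : Fin D,
      ((hsAdjoint ψ M)ᴴ * Matrix.single i j 1).trace
        = (Mᴴ * ψ (Matrix.single i j 1)).trace := by
    intro i j
    rw [trace_conjTranspose_mul_stdBasis, hsAdjoint_apply, star_trace_conj]
  have hN : N = ∑ i : Fin D, ∑ j : Fin D, N i j • Matrix.single i j (1 : ℂ) := by
    conv_lhs => rw [Matrix.matrix_eq_sum_single N]
    refine Finset.sum_congr rfl fun i _ => Finset.sum_congr rfl fun j _ => ?_
    rw [Matrix.smul_single, smul_eq_mul, mul_one]
  conv_lhs => rw [hN]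
  conv_rhs => rw [hN]
  simp only [map_sum, _root_.map_smul, Matrix.mul_sum, Matrix.mul_smul,
    Matrix.trace_sum, Matrix.trace_smul]
  refine Finset.sum_congr rfl fun i _ => Finset.sum_congr rfl fun j _ => ?_
  rw [base]

lemma outer_psd (x : Fin D → ℂ) : (Matrix.vecMulVec x (star x)).PosSemidef := by
  rw [Matrix.vecMulVec_eq (ι := Unit), ← Matrix.conjTranspose_replicateCol]
  exact Matrix.posSemidef_self_mul_conjTranspose _

lemma quad_eq_trace (A : Mat D) (x : Fin D → ℂ) :
    star x ⬝ᵥ A *ᵥ x = (A * Matrix.vecMulVec x (star x)).trace := by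
  rw [Matrix.trace]
  simp only [Matrix.diag_apply, Matrix.mul_apply, Matrix.vecMulVec_apply, dotProduct,
    Matrix.mulVec, Pi.star_apply]
  simp only [Finset.mul_sum]
  refine Finset.sum_congr rfl fun i _ => Finset.sum_congr rfl fun j _ => ?_
  ring

open scoped MatrixOrder in
lemma trace_mul_psd_nonneg {A B : Mat D} (hA : A.PosSemidef) (hB : B.PosSemidef) :
    0 ≤ (A * B).trace := by
  have h1 : (A * B).trace = (CFC.sqrt A * B * CFC.sqrt A).trace := by
    rw [Matrix.trace_mul_cycle, CFC.sqrt_mul_sqrt_self A (Matrix.nonneg_iff_posSemidef.mpr hA)]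
  rw [h1]
  have h2 : (CFC.sqrt A * B * CFC.sqrt A).PosSemidef := by
    have h3 := hB.conjTranspose_mul_mul_same (CFC.sqrt A)
    rwa [(Matrix.nonneg_iff_posSemidef.mp (CFC.sqrt_nonneg A)).1.eq] at h3
  exact psd_trace_nonneg h2

lemma herm_decomp {H : Mat D} (hH : H.IsHermitian) :
    ∃ P1 P2 : Mat D, P1.PosSemidef ∧ P2.PosSemidef ∧ H = P1 - P2 := by
  refine ⟨(hH.eigenvectorUnitary : Mat D)
      * Matrix.diagonal (RCLike.ofReal ∘ fun i => max (hH.eigenvalues i) 0)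
      * (star hH.eigenvectorUnitary : Mat D),
    (hH.eigenvectorUnitary : Mat D)
      * Matrix.diagonal (RCLike.ofReal ∘ fun i => max (-hH.eigenvalues i) 0)
      * (star hH.eigenvectorUnitary : Mat D),
    conj_diag_psd hH _ (fun i => le_max_right _ _),
    conj_diag_psd hH _ (fun i => le_max_right _ _), ?_⟩
  have hfun : (RCLike.ofReal ∘ hH.eigenvalues : Fin D → ℂ)
      = RCLike.ofReal ∘ ((fun i => max (hH.eigenvalues i) 0) - fun i => max (-hH.eigenvalues i) 0) := by
    funext i
    show ((hH.eigenvalues i : ℝ) : ℂ)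
      = ((max (hH.eigenvalues i) 0 - max (-hH.eigenvalues i) 0 : ℝ) : ℂ)
    rw [max_zero_sub_max_neg_zero_eq_self]
  rw [conj_diag_eq, ← hfun]
  have hst := hH.spectral_theorem
  rwa [Unitary.conjStarAlgAut_apply] at hst

lemma pos_map_herm {ψ : MapM D} (hψ : IsPositiveMap ψ) {H : Mat D} (hH : H.IsHermitian) :
    (ψ H).IsHermitian := by
  obtain ⟨P1, P2, h1, h2, rfl⟩ := herm_decomp hH
  rw [map_sub]
  exact ((hψ P1 h1).1).sub ((hψ P2 h2).1)

lemma pos_map_conjTranspose {ψ : MapM D} (hψ : IsPositiveMap ψ) (A : Mat D) :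
    ψ Aᴴ = (ψ A)ᴴ := by
  obtain ⟨H, K, hH, hK, hA1, hA2⟩ : ∃ H K : Mat D, H.IsHermitian ∧ K.IsHermitian ∧
      A = H + Complex.I • K ∧ Aᴴ = H - Complex.I • K := by
    refine ⟨(2⁻¹ : ℂ) • (A + Aᴴ), (Complex.I * 2⁻¹) • (Aᴴ - A), ?_, ?_, ?_, ?_⟩
    · show ((2⁻¹ : ℂ) • (A + Aᴴ))ᴴ = (2⁻¹ : ℂ) • (A + Aᴴ)
      rw [Matrix.conjTranspose_smul, Matrix.conjTranspose_add,
        Matrix.conjTranspose_conjTranspose, show star (2⁻¹ : ℂ) = (2⁻¹ : ℂ) by simp,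
        add_comm Aᴴ A]
    · show ((Complex.I * 2⁻¹) • (Aᴴ - A))ᴴ = (Complex.I * 2⁻¹) • (Aᴴ - A)
      rw [Matrix.conjTranspose_smul, Matrix.conjTranspose_sub,
        Matrix.conjTranspose_conjTranspose,
        show star (Complex.I * 2⁻¹) = -(Complex.I * 2⁻¹) by rw [star_mul']; simp,
        neg_smul, ← smul_neg, neg_sub]
    · rw [smul_smul, show Complex.I * (Complex.I * 2⁻¹) = -(2⁻¹ : ℂ) by
        rw [← mul_assoc, Complex.I_mul_I]; ring]
      module
    · rw [smul_smul, show Complex.I * (Complex.I * 2⁻¹) = -(2⁻¹ : ℂ) by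
        rw [← mul_assoc, Complex.I_mul_I]; ring]
      module
  have hpH := pos_map_herm hψ hH
  have hpK := pos_map_herm hψ hK
  rw [hA2, hA1, map_sub, map_add, _root_.map_smul, Matrix.conjTranspose_add,
    Matrix.conjTranspose_smul, hpH.eq, hpK.eq, Complex.star_def, Complex.conj_I, neg_smul,
    ← sub_eq_add_neg]

lemma stdBasis_conjTranspose (i j : Fin D) :
    (Matrix.single i j (1 : ℂ))ᴴ = Matrix.single j i 1 := by
  ext a b
  simp only [Matrix.conjTranspose_apply, Matrix.single, Matrix.of_apply]
  by_cases h1 : i = b <;> by_cases h2 : j = a <;> simp [h1, h2]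

lemma hsAdjoint_herm {ψ : MapM D} (hψ : IsPositiveMap ψ) {M : Mat D} (hM : M.IsHermitian) :
    (hsAdjoint ψ M).IsHermitian := by
  unfold Matrix.IsHermitian
  ext i j
  rw [Matrix.conjTranspose_apply, hsAdjoint_apply, hsAdjoint_apply, star_trace_conj, hM.eq]
  rw [show Matrix.single j i (1 : ℂ) = (Matrix.single i j (1 : ℂ))ᴴ from
    (stdBasis_conjTranspose i j).symm]
  rw [pos_map_conjTranspose hψ, Matrix.trace_mul_comm]

lemma hsAdjoint_psd {ψ : MapM D} (hψ : IsPositiveMap ψ) {M : Mat D} (hM : M.PosSemidef) :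
    (hsAdjoint ψ M).PosSemidef := by
  refine Matrix.PosSemidef.of_dotProduct_mulVec_nonneg (hsAdjoint_herm hψ hM.1) fun x => ?_
  rw [quad_eq_trace]
  have h1 : hsAdjoint ψ M * Matrix.vecMulVec x (star x)
      = (hsAdjoint ψ M)ᴴ * Matrix.vecMulVec x (star x) := by
    rw [(hsAdjoint_herm hψ hM.1).eq]
  rw [h1, hsAdjoint_trace, hM.1.eq]
  exact trace_mul_psd_nonneg hM (hψ _ (outer_psd x))

lemma posdef_trace_pos (hD : 0 < D) {P : Mat D} (hP : P.PosDef) : 0 < P.trace.re := by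
  haveI : Nonempty (Fin D) := ⟨⟨0, hD⟩⟩
  rw [trace_eq_sum_eigen hP.1, Complex.ofReal_re]
  exact Finset.sum_pos (fun i _ => hP.eigenvalues_pos i) Finset.univ_nonempty

lemma psd_trace_im {A : Mat D} (hA : A.PosSemidef) : A.trace.im = 0 := by
  rw [trace_eq_sum_eigen hA.1, Complex.ofReal_im]

lemma psd_trace_re_nonneg {A : Mat D} (hA : A.PosSemidef) : 0 ≤ A.trace.re :=
  (Complex.nonneg_iff.mp (psd_trace_nonneg hA)).1

/-- key positivity: a positive, non-transient map has positive trace on pos def inputs. -/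
lemma trace_pos_of_nonTransient {ψ : MapM D} (hψpos : IsPositiveMap ψ)
    (hψnt : NonTransient ψ) (hD : 0 < D) {P : Mat D} (hP : P.PosDef) :
    0 < ((ψ P).trace).re := by
  set X : Mat D := hsAdjoint ψ 1 with hX
  have hXpsd : X.PosSemidef := hsAdjoint_psd hψpos Matrix.PosSemidef.one
  have hXne : X ≠ 0 := by
    intro h0
    have hmem : ((D : ℂ)⁻¹ • 1 : Mat D) ∈ SD D := by
      constructor
      · have h5 : ((D : ℂ)⁻¹ • 1 : Mat D) = (((D : ℝ)⁻¹ : ℝ) : ℂ) • 1 := by push_cast; rfl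
        rw [h5]
        exact psd_smul Matrix.PosSemidef.one (by positivity)
      · rw [Matrix.trace_smul, Matrix.trace_one, Fintype.card_fin, smul_eq_mul]
        have : (D : ℂ) ≠ 0 := Nat.cast_ne_zero.mpr hD.ne'
        field_simp
    apply hψnt _ hmem
    show hsAdjoint ψ ((D : ℂ)⁻¹ • 1) = 0
    rw [_root_.map_smul, ← hX, h0, smul_zero]
  have hXtr : 0 < X.trace.re := by
    rcases lt_or_eq_of_le (psd_trace_re_nonneg hXpsd) with h | h
    · exact h
    · exfalso
      apply hXne
      apply psd_trace_eq_zero hXpsd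
      have him := psd_trace_im hXpsd
      apply Complex.ext <;> simp [← h, him]
  obtain ⟨ε, hε, hPe⟩ := posdef_ge_eps hP hD
  have hkey : (ψ P).trace = (X * (P - (ε : ℂ) • 1)).trace + (ε : ℂ) * X.trace := by
    have h1 : (ψ P).trace = (Xᴴ * P).trace := by
      rw [hX, hsAdjoint_trace, Matrix.conjTranspose_one, Matrix.one_mul]
    rw [h1, hXpsd.1.eq, Matrix.mul_sub, Matrix.trace_sub, Matrix.mul_smul, Matrix.mul_one,
      Matrix.trace_smul, smul_eq_mul]
    ring
  have h2 : 0 ≤ (X * (P - (ε : ℂ) • 1)).trace.re :=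
    (Complex.nonneg_iff.mp (trace_mul_psd_nonneg hXpsd hPe)).1
  rw [hkey, Complex.add_re, Complex.re_ofReal_mul]
  have h3 : 0 < ε * X.trace.re := mul_pos hε hXtr
  linarith

open scoped MatrixOrder in
lemma traceNorm_psd {A : Mat D} (hA : A.PosSemidef) : traceNorm A = A.trace.re := by
  have hH := Matrix.posSemidef_conjTranspose_mul_self A
  have h2 : Aᴴ * A = A * A := by rw [hA.1.eq]
  have hsq : CFC.sqrt (Aᴴ * A) = A :=
    (CFC.sqrt_eq_iff _ _ (Matrix.nonneg_iff_posSemidef.mpr hH)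
      (Matrix.nonneg_iff_posSemidef.mpr hA)).mpr h2.symm
  have hc : cfc Real.sqrt (Aᴴ * A) = A := by
    rw [← cfcₙ_eq_cfc (hf := Real.continuous_sqrt.continuousOn) (hf0 := Real.sqrt_zero),
      ← CFC.sqrt_eq_real_sqrt _ (Matrix.nonneg_iff_posSemidef.mpr hH), hsq]
  rw [hH.1.cfc_eq, Matrix.IsHermitian.cfc, Unitary.conjStarAlgAut_apply] at hc
  unfold traceNorm
  exact congrArg (fun M : Mat D => M.trace.re) hc

lemma projAct_mem {φ : MapM D} (hφ : IsStrictlyPositiveMap φ) (hD : 0 < D)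
    {A : Mat D} (hA : A ∈ SD D) :
    (projAct φ A).PosDef ∧ (projAct φ A).trace = 1 := by
  have hPd : (φ A).PosDef := hφ A hA
  have htr : 0 < (φ A).trace.re := posdef_trace_pos hD hPd
  have him : (φ A).trace.im = 0 := psd_trace_im hPd.posSemidef
  have heq : (φ A).trace = (((φ A).trace.re : ℝ) : ℂ) := Complex.ext (by simp) (by simp [him])
  have hne : (φ A).trace ≠ 0 := by
    rw [heq]
    exact_mod_cast htr.ne'
  constructor
  · unfold projAct
    rw [heq]
    rw [show ((((φ A).trace.re : ℝ) : ℂ))⁻¹ = (((((φ A).trace.re)⁻¹ : ℝ)) : ℂ) by push_cast; rfl]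
    exact posdef_smul hPd (by positivity)
  · unfold projAct
    rw [Matrix.trace_smul, smul_eq_mul, inv_mul_cancel₀ hne]

/-- Monotonicity of the trace functional under the matrix order. -/
lemma trace_re_mono {ψ : MapM D} (hψ : IsPositiveMap ψ) {P Q : Mat D} (m : ℝ)
    (h : (P - (m : ℂ) • Q).PosSemidef) :
    m * ((ψ Q).trace).re ≤ ((ψ P).trace).re := by
  have h1 := psd_trace_re_nonneg (hψ _ h)
  rw [map_sub, _root_.map_smul, Matrix.trace_sub, Matrix.trace_smul, smul_eq_mul, Complex.sub_re,
    Complex.re_ofReal_mul] at h1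
  linarith

lemma log_ineq {d r : ℝ} (hd0 : 0 ≤ d) (hd : d ≤ r) (hr0 : 0 < r) (hr1 : r < 1) :
    Real.log (1 + d) - Real.log (1 - d) ≤ d * ((2 / r) * Real.log (1 / (1 - r))) := by
  have h1r : 0 < 1 - r := by linarith
  have hd1 : d < 1 := lt_of_le_of_lt hd hr1
  have hC : Real.log (1 / (1 - r)) = -Real.log (1 - r) := by rw [one_div, Real.log_inv]
  have hCr : r ≤ -Real.log (1 - r) := by
    have := Real.log_le_sub_one_of_pos h1r
    linarith
  set t := d / r with ht
  have ht0 : 0 ≤ t := div_nonneg hd0 hr0.le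
  have ht1 : t ≤ 1 := (div_le_one hr0).mpr hd
  have htr : t * r = d := div_mul_cancel₀ d hr0.ne'
  have p1 : Real.log (1 + d) ≤ t * (-Real.log (1 - r)) := by
    have h2 : Real.log (1 + d) ≤ d := by
      have := Real.log_le_sub_one_of_pos (show (0:ℝ) < 1 + d by linarith)
      linarith
    calc Real.log (1 + d) ≤ d := h2
      _ = t * r := htr.symm
      _ ≤ t * (-Real.log (1 - r)) := mul_le_mul_of_nonneg_left hCr ht0
  have p2 : -Real.log (1 - d) ≤ t * (-Real.log (1 - r)) := by
    have hcon := strictConcaveOn_log_Ioi.concaveOn.2 (Set.mem_Ioi.mpr one_pos)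
      (Set.mem_Ioi.mpr h1r) (by linarith : (0:ℝ) ≤ 1 - t) ht0 (by ring)
    have harg : (1 - t) • (1:ℝ) + t • (1 - r) = 1 - d := by
      simp only [smul_eq_mul]
      linear_combination -htr
    rw [harg, Real.log_one, smul_zero, zero_add, smul_eq_mul] at hcon
    have hre : t * (-Real.log (1 - r)) = -(t * Real.log (1 - r)) := by ring
    rw [hre]
    linarith
  have hfin : Real.log (1 + d) - Real.log (1 - d) ≤ 2 * t * (-Real.log (1 - r)) := by linarith
  calc Real.log (1 + d) - Real.log (1 - d) ≤ 2 * t * (-Real.log (1 - r)) := hfin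
    _ = d * ((2 / r) * Real.log (1 / (1 - r))) := by
        rw [hC, ht]
        ring

end StmtAux


set_option maxHeartbeats 1000000 in
theorem stmt18 {D : ℕ} (ψ φ : MapM D)
    (hψpos : IsPositiveMap ψ) (hψnt : NonTransient ψ)
    (hφ : IsStrictlyPositiveMap φ)
    (r : ℝ) (hr : r ∈ Set.Ioo (0:ℝ) 1) (hc : ccoef φ ≤ r) :
    ∀ A ∈ SD D, ∀ B ∈ SD D,
      |Real.log (traceNorm (ψ (projAct φ A))) - Real.log (traceNorm (ψ (projAct φ B)))| ≤
        ccoef φ * ((2 / r) * Real.log (1 / (1 - r)))   := by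
  intro A hA B hB
  have hr0 : (0:ℝ) < r := hr.1
  have hr1 : r < 1 := hr.2
  have hD : 0 < D := by
    rcases Nat.eq_zero_or_pos D with h | h
    · exfalso
      have h2 := hA.2
      subst h
      simp [Matrix.trace] at h2
    · exact h
  obtain ⟨hPd, hPt⟩ := StmtAux.projAct_mem hφ hD hA
  obtain ⟨hQd, hQt⟩ := StmtAux.projAct_mem hφ hD hB
  set P := projAct φ A with hPdef
  set Q := projAct φ B with hQdef
  set m := mcoef P Q with hm
  set m' := mcoef Q P with hm'
  have hm_pos : 0 < m := StmtAux.mcoef_pos hD hPd hQd.posSemidef hPt hQt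
  have hm'_pos : 0 < m' := StmtAux.mcoef_pos hD hQd hPd.posSemidef hQt hPt
  have hm_le : m ≤ 1 := StmtAux.mcoef_le_one hPd.posSemidef hPt hQt
  have hm'_le : m' ≤ 1 := StmtAux.mcoef_le_one hQd.posSemidef hQt hPt
  have hmemPQ := StmtAux.mcoef_mem hPd.posSemidef hQd.posSemidef hPt hQt
  have hmemQP := StmtAux.mcoef_mem hQd.posSemidef hPd.posSemidef hQt hPt
  set a := ((ψ P).trace).re with ha_def
  set b := ((ψ Q).trace).re with hb_def
  have ha : 0 < a := StmtAux.trace_pos_of_nonTransient hψpos hψnt hD hPd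
  have hb : 0 < b := StmtAux.trace_pos_of_nonTransient hψpos hψnt hD hQd
  have hab : m * b ≤ a := StmtAux.trace_re_mono hψpos m hmemPQ
  have hba : m' * a ≤ b := StmtAux.trace_re_mono hψpos m' hmemQP
  have htnP : traceNorm (ψ P) = a := StmtAux.traceNorm_psd (hψpos P hPd.posSemidef)
  have htnQ : traceNorm (ψ Q) = b := StmtAux.traceNorm_psd (hψpos Q hQd.posSemidef)
  set x := m * m' with hx_def
  have hx0 : 0 < x := mul_pos hm_pos hm'_pos
  have hx1 : x ≤ 1 := mul_le_one₀ hm_le hm'_pos.le hm'_le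
  -- log bounds
  have hL2 : Real.log m + Real.log b ≤ Real.log a := by
    have h1 := Real.log_le_log (by positivity) hab
    rwa [Real.log_mul hm_pos.ne' hb.ne'] at h1
  have hL1 : Real.log m' + Real.log a ≤ Real.log b := by
    have h1 := Real.log_le_log (by positivity) hba
    rwa [Real.log_mul hm'_pos.ne' ha.ne'] at h1
  have hlogx : Real.log x = Real.log m + Real.log m' := Real.log_mul hm_pos.ne' hm'_pos.ne'
  have hlm : Real.log m ≤ 0 := Real.log_nonpos hm_pos.le hm_le
  have hlm' : Real.log m' ≤ 0 := Real.log_nonpos hm'_pos.le hm'_le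
  have habs : |Real.log a - Real.log b| ≤ -Real.log x := by
    rw [abs_le]
    constructor
    · have : Real.log x ≤ Real.log a - Real.log b := by rw [hlogx]; linarith
      linarith
    · rw [hlogx]; linarith
  -- relate x and d
  set d := dmet P Q with hd_def
  have hd_eq : d = (1 - x) / (1 + x) := rfl
  have h1x : 0 < 1 + x := by linarith
  have hd0 : 0 ≤ d := by
    rw [hd_eq]
    apply div_nonneg <;> linarith
  have h1d : 1 + d = 2 / (1 + x) := by
    rw [hd_eq]; field_simp; ring
  have h2d : 1 - d = 2 * x / (1 + x) := by
    rw [hd_eq]; field_simp; ring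
  have h1d_pos : 0 < 1 + d := by rw [h1d]; positivity
  have h2d_pos : 0 < 1 - d := by rw [h2d]; positivity
  have hlog_rel : -Real.log x = Real.log (1 + d) - Real.log (1 - d) := by
    rw [← Real.log_div h1d_pos.ne' h2d_pos.ne']
    rw [h1d, h2d]
    rw [show 2 / (1 + x) / (2 * x / (1 + x)) = x⁻¹ by field_simp]
    rw [Real.log_inv]
  -- d ≤ ccoef φ
  have hccB : BddAbove {y : ℝ | ∃ A ∈ SD D, ∃ B ∈ SD D,
      y = dmet (projAct φ A) (projAct φ B)} := by
    refine ⟨1, ?_⟩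
    rintro y ⟨A', hA', B', hB', rfl⟩
    obtain ⟨hPd', hPt'⟩ := StmtAux.projAct_mem hφ hD hA'
    obtain ⟨hQd', hQt'⟩ := StmtAux.projAct_mem hφ hD hB'
    have h1 : 0 ≤ mcoef (projAct φ A') (projAct φ B') :=
      StmtAux.mcoef_nonneg hPd'.posSemidef hPt' hQt'
    have h2 : 0 ≤ mcoef (projAct φ B') (projAct φ A') :=
      StmtAux.mcoef_nonneg hQd'.posSemidef hQt' hPt'
    have hxx : 0 ≤ mcoef (projAct φ A') (projAct φ B') * mcoef (projAct φ B') (projAct φ A') :=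
      mul_nonneg h1 h2
    have hd' : dmet (projAct φ A') (projAct φ B')
        = (1 - mcoef (projAct φ A') (projAct φ B') * mcoef (projAct φ B') (projAct φ A'))
          / (1 + mcoef (projAct φ A') (projAct φ B') * mcoef (projAct φ B') (projAct φ A')) := rfl
    rw [hd', div_le_one (by linarith)]
    linarith
  have hdc : d ≤ ccoef φ := le_csSup hccB ⟨A, hA, B, hB, rfl⟩
  have hdr : d ≤ r := hdc.trans hc
  have hconst : 0 ≤ (2 / r) * Real.log (1 / (1 - r)) := by
    apply mul_nonneg
    · apply div_nonneg (by norm_num) hr0.le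
    · apply Real.log_nonneg
      rw [le_div_iff₀ (by linarith : (0:ℝ) < 1 - r)]
      linarith
  calc |Real.log (traceNorm (ψ P)) - Real.log (traceNorm (ψ Q))|
      = |Real.log a - Real.log b| := by rw [htnP, htnQ]
    _ ≤ -Real.log x := habs
    _ = Real.log (1 + d) - Real.log (1 - d) := hlog_rel
    _ ≤ d * ((2 / r) * Real.log (1 / (1 - r))) := StmtAux.log_ineq hd0 hdr hr.1 hr.2
    _ ≤ ccoef φ * ((2 / r) * Real.log (1 / (1 - r))) :=
        mul_le_mul_of_nonneg_right hdc hconst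


end
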